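/- Let L_⋆, R_⋆, L_♯, R_♯ be matrices (L's are n₁×r, R's are n₂×r) with L_⋆ = U_⋆ G^{1/2}, R_⋆ = V_⋆ G^{1/2} where U_⋆, V_⋆ have orthonormal columns and G is positive definite diagonal. Set Δ_L = L_♯ − L_⋆ and Δ_R = R_♯ − R_⋆. Then ‖L_♯ R_♯ᴴ − L_⋆ R_⋆ᴴ‖_F ≤ (1 + (1/2)·max(‖Δ_L G^{−1/2}‖, ‖Δ_R G^{−1/2}‖)) · (‖Δ_L G^{1/2}‖_F + ‖Δ_R G^{1/2}‖_F). -/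

import Mathlib

open Matrix BigOperators

/-- Frobenius norm of a real matrix. -/
noncomputable def frob {m n : Type*} [Fintype m] [Fintype n] (A : Matrix m n ℝ) : ℝ :=
  Real.sqrt (∑ i, ∑ j, (A i j) ^ 2)

/-- Spectral norm (largest singular value) of a real matrix. -/
noncomputable def specNorm {m n : Type*} [Fintype m] [Fintype n] [DecidableEq n]
    (A : Matrix m n ℝ) : ℝ :=
  Real.sqrt (⨆ i, (Matrix.isHermitian_conjTranspose_mul_self A).eigenvalues i)

/-- Smallest singular value (√(λ_min(AᴴA)) convention). -/
noncomputable def sigmaMin {m n : Type*} [Fintype m] [Fintype n] [DecidableEq n]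
    (A : Matrix m n ℝ) : ℝ :=
  Real.sqrt (⨅ i, (Matrix.isHermitian_conjTranspose_mul_self A).eigenvalues i)

/-- Maximum Euclidean row norm ‖·‖₂,∞. -/
noncomputable def rowTwoInf {m n : Type*} [Fintype m] [Fintype n] (A : Matrix m n ℝ) : ℝ :=
  ⨆ i, Real.sqrt (∑ j, (A i j) ^ 2)

/-- Entrywise sup norm ‖·‖∞. -/
noncomputable def entryInf {m n : Type*} [Fintype m] [Fintype n] (A : Matrix m n ℝ) : ℝ :=
  ⨆ i, ⨆ j, |A i j|


section aux
variable {m n p : Type*} [Fintype m] [Fintype n] [Fintype p]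

lemma frob_nonneg (A : Matrix m n ℝ) : 0 ≤ frob A := Real.sqrt_nonneg _

lemma sum_sq_eq_trace (A : Matrix m n ℝ) : ∑ i, ∑ j, A i j ^ 2 = trace (A * Aᵀ) := by
  simp [trace, Matrix.mul_apply, diag, sq]

lemma frob_eq_trace (A : Matrix m n ℝ) : frob A = Real.sqrt (trace (A * Aᵀ)) := by
  rw [frob, sum_sq_eq_trace]

lemma frob_transpose (A : Matrix m n ℝ) : frob Aᵀ = frob A := by
  rw [frob, frob, Finset.sum_comm]
  rfl

lemma frob_mul_ortho_right [DecidableEq p] (A : Matrix m p ℝ) (V : Matrix n p ℝ)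
    (hV : Vᵀ * V = 1) : frob (A * Vᵀ) = frob A := by
  rw [frob_eq_trace, frob_eq_trace A, transpose_mul, transpose_transpose,
    Matrix.mul_assoc A Vᵀ (V * Aᵀ), ← Matrix.mul_assoc Vᵀ V Aᵀ, hV, Matrix.one_mul]

lemma frob_ortho_mul [DecidableEq p] (U : Matrix m p ℝ) (B : Matrix p n ℝ)
    (hU : Uᵀ * U = 1) : frob (U * B) = frob B := by
  rw [← frob_transpose (U * B), transpose_mul, frob_mul_ortho_right _ U hU, frob_transpose]

lemma frob_add_le (A B : Matrix m n ℝ) : frob (A + B) ≤ frob A + frob B := by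
  have key : ∀ C : Matrix m n ℝ,
      frob C = ‖(WithLp.equiv 2 ((m × n) → ℝ)).symm (fun pq => C pq.1 pq.2)‖ := by
    intro C
    rw [EuclideanSpace.norm_eq, frob]
    simp [Fintype.sum_prod_type, sq_abs]
  rw [key, key, key]
  rw [show (fun pq : m × n => (A + B) pq.1 pq.2) = (fun pq => A pq.1 pq.2) + (fun pq => B pq.1 pq.2) from rfl,
    WithLp.equiv_symm_apply, WithLp.toLp_add]
  exact norm_add_le _ _

end aux

section spec
variable {m n r : Type*} [Fintype m] [Fintype n] [Fintype r] [DecidableEq r]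

lemma sq_sum_mulVec (A : Matrix m r ℝ) (x : r → ℝ) :
    ∑ i, (A *ᵥ x) i ^ 2 = x ⬝ᵥ ((Aᴴ * A) *ᵥ x) := by
  rw [← Matrix.mulVec_mulVec, Matrix.dotProduct_mulVec x Aᴴ, Matrix.vecMul_conjTranspose]
  simp [dotProduct, sq, star_trivial]

lemma mulVec_sq_le (A : Matrix m r ℝ) (x : r → ℝ) :
    ∑ i, (A *ᵥ x) i ^ 2 ≤
      (⨆ i, (Matrix.isHermitian_conjTranspose_mul_self A).eigenvalues i) * ∑ i, x i ^ 2 := by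
  have hM := Matrix.isHermitian_conjTranspose_mul_self A
  set lam := hM.eigenvalues with hlam
  set Q : Matrix r r ℝ := (hM.eigenvectorUnitary : Matrix r r ℝ) with hQ
  have hQs : star Q = Qᵀ := by
    ext i j; simp [star_apply]
  set y : r → ℝ := Qᵀ *ᵥ x with hy
  have hsq : ∀ (B : Matrix r r ℝ), ∑ i, (B *ᵥ x) i ^ 2 = x ⬝ᵥ ((Bᴴ * B) *ᵥ x) :=
    fun B => sq_sum_mulVec B x
  have hyx : ∑ i, y i ^ 2 = ∑ i, x i ^ 2 := by
    have h1 : ∑ i, (Qᵀ *ᵥ x) i ^ 2 = x ⬝ᵥ (((Qᵀ)ᴴ * Qᵀ) *ᵥ x) := sq_sum_mulVec Qᵀ x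
    have h2 : (Qᵀ)ᴴ * Qᵀ = 1 := by
      have h3 : Q * star Q = 1 := (Matrix.mem_unitaryGroup_iff).mp hM.eigenvectorUnitary.2
      have : (Qᵀ)ᴴ = Q := by ext i j; simp [conjTranspose_apply, star_trivial]
      rw [this, ← hQs, h3]
    rw [hy, h1, h2, Matrix.one_mulVec]
    simp [dotProduct, sq]
  have key : x ⬝ᵥ ((Aᴴ * A) *ᵥ x) = ∑ i, lam i * y i ^ 2 := by
    conv_lhs => rw [hM.spectral_theorem, Unitary.conjStarAlgAut_apply]
    rw [← Matrix.mulVec_mulVec, ← Matrix.mulVec_mulVec, Matrix.dotProduct_mulVec x,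
      ← hQ, ← Matrix.mulVec_transpose]
    simp only [hQs, dotProduct, Matrix.mulVec_diagonal, sq, hy, hlam, Function.comp,
      RCLike.ofReal_real_eq_id, id_eq]
    exact Finset.sum_congr rfl fun i _ => by ring
  rw [sq_sum_mulVec A x, key]
  have hb : ∀ i, lam i ≤ ⨆ j, lam j := fun i => le_ciSup (Set.Finite.bddAbove (Set.finite_range lam)) i
  calc ∑ i, lam i * y i ^ 2 ≤ ∑ i, (⨆ j, lam j) * y i ^ 2 :=
        Finset.sum_le_sum fun i _ => mul_le_mul_of_nonneg_right (hb i) (sq_nonneg _)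
    _ = (⨆ j, lam j) * ∑ i, y i ^ 2 := by rw [Finset.mul_sum]
    _ = _ := by rw [hyx]

lemma frob_mul_le (A : Matrix m r ℝ) (B : Matrix r n ℝ) :
    frob (A * B) ≤ specNorm A * frob B := by
  set S := ⨆ i, (Matrix.isHermitian_conjTranspose_mul_self A).eigenvalues i with hS
  have hS0 : 0 ≤ S := Real.iSup_nonneg fun i =>
    Matrix.eigenvalues_conjTranspose_mul_self_nonneg A i
  have hsum : ∑ i, ∑ j, (A * B) i j ^ 2 ≤ S * ∑ i, ∑ j, B i j ^ 2 := by
    rw [Finset.sum_comm]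
    calc ∑ j, ∑ i, (A * B) i j ^ 2
        = ∑ j : n, ∑ i, (A *ᵥ (fun k => B k j)) i ^ 2 := by
          refine Finset.sum_congr rfl fun j _ => Finset.sum_congr rfl fun i _ => ?_
          simp [Matrix.mul_apply, Matrix.mulVec, dotProduct]
      _ ≤ ∑ j : n, S * ∑ k, B k j ^ 2 :=
          Finset.sum_le_sum fun j _ => mulVec_sq_le A _
      _ = S * ∑ j, ∑ k, B k j ^ 2 := by rw [Finset.mul_sum]
      _ = S * ∑ k, ∑ j, B k j ^ 2 := by rw [Finset.sum_comm]
  rw [frob, frob, specNorm, ← hS, ← Real.sqrt_mul hS0]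
  exact Real.sqrt_le_sqrt hsum

lemma specNorm_nonneg (A : Matrix m r ℝ) : 0 ≤ specNorm A := Real.sqrt_nonneg _

end spec


theorem stmt_9 {n₁ n₂ r : Type*} [Fintype n₁] [Fintype n₂] [Fintype r] [DecidableEq r]
    (U : Matrix n₁ r ℝ) (V : Matrix n₂ r ℝ) (g : r → ℝ) (hg : ∀ i, 0 < g i)
    (hU : Uᵀ * U = 1) (hV : Vᵀ * V = 1)
    (Ls : Matrix n₁ r ℝ) (Rs : Matrix n₂ r ℝ) :
    frob (Ls * Rsᵀ - (U * Matrix.diagonal g) * (V * Matrix.diagonal g)ᵀ) ≤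
      (1 + (1 / 2) *
        max (specNorm ((Ls - U * Matrix.diagonal g) * Matrix.diagonal (fun i => (g i)⁻¹)))
            (specNorm ((Rs - V * Matrix.diagonal g) * Matrix.diagonal (fun i => (g i)⁻¹)))) *
      (frob ((Ls - U * Matrix.diagonal g) * Matrix.diagonal g) +
       frob ((Rs - V * Matrix.diagonal g) * Matrix.diagonal g)) := by
  set D : Matrix r r ℝ := Matrix.diagonal g with hD
  set Di : Matrix r r ℝ := Matrix.diagonal (fun i => (g i)⁻¹) with hDi
  set dL : Matrix n₁ r ℝ := Ls - U * D with hdL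
  set dR : Matrix n₂ r ℝ := Rs - V * D with hdR
  have hDt : Dᵀ = D := Matrix.diagonal_transpose g
  have hDiD : Di * D = 1 := by
    rw [hDi, hD, Matrix.diagonal_mul_diagonal]
    convert Matrix.diagonal_one with i
    exact inv_mul_cancel₀ (hg i).ne'
  set a := frob (dL * D) with ha
  set b := frob (dR * D) with hb
  set sL := specNorm (dL * Di) with hsL
  set sR := specNorm (dR * Di) with hsR
  have hdec : Ls * Rsᵀ - (U * D) * (V * D)ᵀ
      = dL * (V * D)ᵀ + (U * D) * dRᵀ + dL * dRᵀ := by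
    rw [hdL, hdR]
    simp only [Matrix.transpose_sub, Matrix.sub_mul, Matrix.mul_sub]
    abel
  have hVDt : (V * D)ᵀ = D * Vᵀ := by rw [Matrix.transpose_mul, hDt]
  have hT1 : frob (dL * (V * D)ᵀ) = a := by
    rw [hVDt, ← Matrix.mul_assoc, frob_mul_ortho_right (dL * D) V hV, ha]
  have hDdRt : D * dRᵀ = (dR * D)ᵀ := by rw [Matrix.transpose_mul, hDt]
  have hT2 : frob ((U * D) * dRᵀ) = b := by
    rw [Matrix.mul_assoc, frob_ortho_mul U (D * dRᵀ) hU, hDdRt, frob_transpose, hb]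
  have hT3a : frob (dL * dRᵀ) ≤ sL * b := by
    have : dL * dRᵀ = (dL * Di) * (D * dRᵀ) := by
      rw [← Matrix.mul_assoc, Matrix.mul_assoc dL Di D, hDiD, Matrix.mul_one]
    rw [this, hDdRt]
    calc frob ((dL * Di) * (dR * D)ᵀ) ≤ specNorm (dL * Di) * frob (dR * D)ᵀ :=
          frob_mul_le _ _
      _ = sL * b := by rw [frob_transpose]
  have hT3b : frob (dL * dRᵀ) ≤ sR * a := by
    have h1 : frob (dL * dRᵀ) = frob (dR * dLᵀ) := by
      rw [← frob_transpose (dL * dRᵀ), Matrix.transpose_mul, Matrix.transpose_transpose]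
    have h2 : dR * dLᵀ = (dR * Di) * (dL * D)ᵀ := by
      rw [Matrix.transpose_mul, hDt, ← Matrix.mul_assoc, Matrix.mul_assoc dR Di D, hDiD,
        Matrix.mul_one]
    rw [h1, h2]
    calc frob ((dR * Di) * (dL * D)ᵀ) ≤ specNorm (dR * Di) * frob (dL * D)ᵀ :=
          frob_mul_le _ _
      _ = sR * a := by rw [frob_transpose]
  have htri : frob (Ls * Rsᵀ - (U * D) * (V * D)ᵀ)
      ≤ a + b + frob (dL * dRᵀ) := by
    rw [hdec]
    calc frob (dL * (V * D)ᵀ + (U * D) * dRᵀ + dL * dRᵀ)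
        ≤ frob (dL * (V * D)ᵀ + (U * D) * dRᵀ) + frob (dL * dRᵀ) := frob_add_le _ _
      _ ≤ frob (dL * (V * D)ᵀ) + frob ((U * D) * dRᵀ) + frob (dL * dRᵀ) := by
          have := frob_add_le (dL * (V * D)ᵀ) ((U * D) * dRᵀ)
          linarith
      _ = a + b + frob (dL * dRᵀ) := by rw [hT1, hT2]
  have ha0 : 0 ≤ a := frob_nonneg _
  have hb0 : 0 ≤ b := frob_nonneg _
  have hsLM : sL ≤ max sL sR := le_max_left _ _
  have hsRM : sR ≤ max sL sR := le_max_right _ _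
  nlinarith [htri, hT3a, hT3b, ha0, hb0, hsLM, hsRM]
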